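/- Let M, C, K ∈ ℝ^{n×n} with M positive definite, b ∈ ℝⁿ, and let λ₁,…,λ_p be eigenvalues of the pencil λ²M + λC + K with eigenvectors x₁,…,x_p, let μ₁,…,μ_p be complex numbers with all λᵢ, μⱼ pairwise distinct, and suppose y₁,…,y_p solve (μⱼ²M + μⱼC + K)yⱼ = b. Then the matrix H = Λ₁ X₁ᵀ M Y₁ + X₁ᵀ M Y₁ Σ₁ + X₁ᵀ C Y₁ factors as H = diag(bᵀx₁,…,bᵀx_p) · Ĥ, where Ĥ_{ij} = 1/(μⱼ − λᵢ). -/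
import Mathlib


open Matrix

/-- Complexification of a real matrix. -/
def mc {n m : ℕ} (A : Matrix (Fin n) (Fin m) ℝ) : Matrix (Fin n) (Fin m) ℂ :=
  A.map Complex.ofReal

/-- Complexification of a real vector. -/
def vc {n : ℕ} (v : Fin n → ℝ) : Fin n → ℂ := fun i => (v i : ℂ)

lemma mc_symm {n : ℕ} {A : Matrix (Fin n) (Fin n) ℝ} (hA : A.IsSymm) :
    (mc A)ᵀ = mc A := by
  unfold mc
  rw [← Matrix.transpose_map, hA.eq]

lemma swap_dot {n : ℕ} {A : Matrix (Fin n) (Fin n) ℝ} (hA : A.IsSymm)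
    (u v : Fin n → ℂ) : u ⬝ᵥ (mc A *ᵥ v) = v ⬝ᵥ (mc A *ᵥ u) := by
  rw [Matrix.dotProduct_mulVec]
  have : (mc A).vecMul u = mc A *ᵥ u := by
    rw [← mc_symm hA, Matrix.vecMul_transpose, mc_symm hA]
  rw [this, dotProduct_comm]

theorem stmt_6 (n p : ℕ) (M C K : Matrix (Fin n) (Fin n) ℝ)
    (hM : M.IsSymm) (hC : C.IsSymm) (hK : K.IsSymm) (hMpd : M.PosDef)
    (b : Fin n → ℝ)
    (lam mu : Fin p → ℂ)
    (hdist : Function.Injective (Sum.elim lam mu : Fin p ⊕ Fin p → ℂ))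
    (x y : Fin p → Fin n → ℂ)
    (heigx : ∀ i, ((lam i) ^ 2 • mc M + lam i • mc C + mc K) *ᵥ x i = 0)
    (heigy : ∀ j, ((mu j) ^ 2 • mc M + mu j • mc C + mc K) *ᵥ y j = vc b)
    (X1 Y1 : Matrix (Fin n) (Fin p) ℂ)
    (hX1 : X1 = Matrix.of fun r i => x i r)
    (hY1 : Y1 = Matrix.of fun r j => y j r)
    (H : Matrix (Fin p) (Fin p) ℂ)
    (hH : H = Matrix.diagonal lam * X1ᵀ * mc M * Y1 + X1ᵀ * mc M * Y1 * Matrix.diagonal mu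
      + X1ᵀ * mc C * Y1) :
    H = Matrix.diagonal (fun i => vc b ⬝ᵥ x i) *
      Matrix.of (fun i j : Fin p => 1 / (mu j - lam i)) := by
  have key : ∀ (A : Matrix (Fin n) (Fin n) ℂ) (i j : Fin p),
      (X1ᵀ * A * Y1) i j = x i ⬝ᵥ (A *ᵥ y j) := by
    intro A i j
    subst hX1 hY1
    simp only [Matrix.mul_apply, Matrix.transpose_apply, Matrix.of_apply,
      Matrix.mulVec, dotProduct, Finset.sum_mul, Finset.mul_sum]
    rw [Finset.sum_comm]
    congr 1; ext s; congr 1; ext r; ring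
  ext i j
  have hne : mu j - lam i ≠ 0 := by
    intro h
    have h' : lam i = mu j := by linear_combination -h
    have := hdist (a₁ := Sum.inl i) (a₂ := Sum.inr j) (by simpa using h')
    simp at this
  set m := x i ⬝ᵥ (mc M *ᵥ y j) with hm
  set c := x i ⬝ᵥ (mc C *ᵥ y j) with hc
  set k := x i ⬝ᵥ (mc K *ᵥ y j) with hk
  have e1 : (lam i) ^ 2 * m + lam i * c + k = 0 := by
    have := congrArg (fun v => y j ⬝ᵥ v) (heigx i)
    simp only [Matrix.add_mulVec, Matrix.smul_mulVec, dotProduct_add,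
      dotProduct_smul, dotProduct_zero, smul_eq_mul] at this
    rw [swap_dot hM, swap_dot hC, swap_dot hK] at this
    rw [hm, hc, hk]; linear_combination this
  have e2 : (mu j) ^ 2 * m + mu j * c + k = vc b ⬝ᵥ x i := by
    have := congrArg (fun v => x i ⬝ᵥ v) (heigy j)
    simp only [Matrix.add_mulVec, Matrix.smul_mulVec, dotProduct_add,
      dotProduct_smul, smul_eq_mul] at this
    rw [hm, hc, hk, show vc b ⬝ᵥ x i = x i ⬝ᵥ vc b from dotProduct_comm _ _]
    linear_combination this
  have hHij : H i j = (lam i + mu j) * m + c := by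
    rw [hH]
    simp only [Matrix.add_apply]
    have h1 : (Matrix.diagonal lam * X1ᵀ * mc M * Y1) i j
        = lam i * ((X1ᵀ * mc M * Y1) i j) := by
      rw [show Matrix.diagonal lam * X1ᵀ * mc M * Y1
          = Matrix.diagonal lam * (X1ᵀ * mc M * Y1) by
            simp only [Matrix.mul_assoc],
        Matrix.diagonal_mul]
    have h2 : (X1ᵀ * mc M * Y1 * Matrix.diagonal mu) i j
        = ((X1ᵀ * mc M * Y1) i j) * mu j := by
      rw [Matrix.mul_diagonal]
    rw [h1, h2, key, key, ← hm, ← hc]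
    ring
  have hmain : H i j * (mu j - lam i) = vc b ⬝ᵥ x i := by
    rw [hHij]; linear_combination e2 - e1
  have : (Matrix.diagonal (fun i => vc b ⬝ᵥ x i) *
      Matrix.of (fun i j : Fin p => 1 / (mu j - lam i))) i j
      = (vc b ⬝ᵥ x i) * (1 / (mu j - lam i)) := by
    rw [Matrix.diagonal_mul]; rfl
  rw [this, ← hmain]
  field_simp
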